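/- Let p ≥ 3 and let H, C be N×N Hermitian matrices where C has at most r nonzero entries, each bounded in absolute value by M. Then |tr((H+C)^p) - tr(H^p) - tr(C^p)| ≤ 2^p · r · max_{1≤k≤p-1} ‖H‖^k · (rM)^{p-k}, and moreover ‖C‖ ≤ rM. -/

import Mathlib

open Finset

/-- Operator (spectral) norm of a complex matrix. -/
noncomputable def opNorm {N : ℕ} (M : Matrix (Fin N) (Fin N) ℂ) : ℝ :=
  ‖Matrix.toEuclideanCLM (𝕜 := ℂ) M‖

section Aux
open Matrix

lemma opNorm_nonneg {N : ℕ} (A : Matrix (Fin N) (Fin N) ℂ) : 0 ≤ opNorm A := norm_nonneg _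

lemma opNorm_mul_le {N : ℕ} (A B : Matrix (Fin N) (Fin N) ℂ) :
    opNorm (A * B) ≤ opNorm A * opNorm B := by
  unfold opNorm; rw [_root_.map_mul]; exact norm_mul_le _ _

lemma coord_le_norm {N : ℕ} (x : EuclideanSpace ℂ (Fin N)) (i : Fin N) : ‖x i‖ ≤ ‖x‖ := by
  have h := norm_inner_le_norm (𝕜 := ℂ) (EuclideanSpace.single i (1:ℂ)) x
  simpa [EuclideanSpace.inner_single_left, EuclideanSpace.norm_single] using h

lemma entry_le_opNorm {N : ℕ} (A : Matrix (Fin N) (Fin N) ℂ) (i j : Fin N) :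
    ‖A i j‖ ≤ opNorm A := by
  have h1 : Matrix.toEuclideanCLM (𝕜 := ℂ) A (EuclideanSpace.single j 1) =
      (WithLp.equiv 2 _).symm (A.mulVec (Pi.single j 1)) := by
    rfl
  have h2 : ‖Matrix.toEuclideanCLM (𝕜 := ℂ) A (EuclideanSpace.single j 1)‖ ≤ opNorm A := by
    have := ContinuousLinearMap.le_opNorm (Matrix.toEuclideanCLM (𝕜 := ℂ) A)
      (EuclideanSpace.single j (1:ℂ))
    rw [EuclideanSpace.norm_single, norm_one, mul_one] at this
    exact this
  calc ‖A i j‖ = ‖((WithLp.equiv 2 _).symm (A.mulVec (Pi.single j 1)) : EuclideanSpace ℂ (Fin N)) i‖ := by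
        simp [Matrix.mulVec_single, WithLp.equiv_symm_apply, PiLp.toLp_apply]
    _ ≤ ‖((WithLp.equiv 2 _).symm (A.mulVec (Pi.single j 1)) : EuclideanSpace ℂ (Fin N))‖ :=
        coord_le_norm _ i
    _ ≤ opNorm A := h1 ▸ h2

lemma opNorm_stdBasis {N : ℕ} (i j : Fin N) (c : ℂ) :
    opNorm (Matrix.single i j c) ≤ ‖c‖ := by
  unfold opNorm
  apply ContinuousLinearMap.opNorm_le_bound _ (norm_nonneg c)
  intro x
  have hx : x = (WithLp.equiv 2 _).symm (WithLp.equiv 2 _ x) := rfl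
  erw [hx, Matrix.toEuclideanCLM_toLp,
    Matrix.single_mulVec]
  have he : (WithLp.toLp 2 (Function.update (0 : Fin N → ℂ) i
      (c * (WithLp.equiv 2 _) x j)) : EuclideanSpace ℂ (Fin N)) =
      EuclideanSpace.single i (c * (WithLp.equiv 2 _) x j) := rfl
  rw [he, EuclideanSpace.norm_single, norm_mul]
  exact mul_le_mul_of_nonneg_left (coord_le_norm x j) (norm_nonneg c)

lemma opNorm_le_card_mul {N r : ℕ} (M : ℝ) (hM : 0 ≤ M) (C : Matrix (Fin N) (Fin N) ℂ)
    (hcard : (univ.filter (fun q : Fin N × Fin N => C q.1 q.2 ≠ 0)).card ≤ r)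
    (hbnd : ∀ i j, ‖C i j‖ ≤ M) : opNorm C ≤ r * M := by
  classical
  set s := univ.filter (fun q : Fin N × Fin N => C q.1 q.2 ≠ 0) with hs
  have hdecomp : C = ∑ q ∈ s, Matrix.single q.1 q.2 (C q.1 q.2) := by
    conv_lhs => rw [matrix_eq_sum_single C]
    rw [← Fintype.sum_prod_type']
    refine (Finset.sum_filter_of_ne ?_).symm
    intro q _ hq
    by_contra h
    exact hq (by rw [h]; ext a b; simp [Matrix.single])
  have h1 : opNorm C ≤ ∑ q ∈ s, opNorm (Matrix.single q.1 q.2 (C q.1 q.2)) := by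
    conv_lhs => rw [hdecomp]
    unfold opNorm
    rw [map_sum]
    exact norm_sum_le _ _
  have h2 : (∑ q ∈ s, opNorm (Matrix.single q.1 q.2 (C q.1 q.2))) ≤ ∑ _q ∈ s, M :=
    Finset.sum_le_sum fun q _ => (opNorm_stdBasis _ _ _).trans (hbnd _ _)
  have h3 : (∑ _q ∈ s, M) = s.card * M := by rw [Finset.sum_const, nsmul_eq_mul]
  calc opNorm C ≤ s.card * M := by rw [← h3]; exact h1.trans h2
    _ ≤ r * M := by
        apply mul_le_mul_of_nonneg_right _ hM
        exact_mod_cast hcard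

lemma trace_mul_bound {N r : ℕ} (M : ℝ) (C V : Matrix (Fin N) (Fin N) ℂ)
    (hcard : (univ.filter (fun q : Fin N × Fin N => C q.1 q.2 ≠ 0)).card ≤ r)
    (hbnd : ∀ i j, ‖C i j‖ ≤ M) (hM : 0 ≤ M) :
    ‖(C * V).trace‖ ≤ r * (M * opNorm V) := by
  classical
  set s := univ.filter (fun q : Fin N × Fin N => C q.1 q.2 ≠ 0) with hs
  have ht : (C * V).trace = ∑ q ∈ s, C q.1 q.2 * V q.2 q.1 := by
    rw [Matrix.trace]
    simp only [Matrix.diag, Matrix.mul_apply]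
    rw [← Fintype.sum_prod_type']
    refine (Finset.sum_filter_of_ne ?_).symm
    intro q _ hq h
    exact hq (by rw [h, zero_mul])
  rw [ht]
  calc ‖∑ q ∈ s, C q.1 q.2 * V q.2 q.1‖ ≤ ∑ q ∈ s, ‖C q.1 q.2 * V q.2 q.1‖ := norm_sum_le _ _
    _ ≤ ∑ _q ∈ s, M * opNorm V := by
        refine Finset.sum_le_sum fun q _ => ?_
        rw [norm_mul]
        exact mul_le_mul (hbnd _ _) (entry_le_opNorm _ _ _) (norm_nonneg _)  hM
    _ = s.card * (M * opNorm V) := by rw [Finset.sum_const, nsmul_eq_mul]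
    _ ≤ r * (M * opNorm V) := by
        apply mul_le_mul_of_nonneg_right _ (mul_nonneg hM (norm_nonneg _))
        exact_mod_cast hcard

lemma trace_rotate {N : ℕ} (l : List (Matrix (Fin N) (Fin N) ℂ)) (n : ℕ) (hn : n ≤ l.length) :
    ((l.rotate n).prod).trace = (l.prod).trace := by
  rw [List.rotate_eq_drop_append_take hn, List.prod_append, Matrix.trace_mul_comm,
    ← List.prod_append, List.take_append_drop]

lemma expand {N : ℕ} (A B : Matrix (Fin N) (Fin N) ℂ) (n : ℕ) :
    (A + B) ^ n = ∑ f : Fin n → Bool, (List.ofFn fun i => if f i then A else B).prod := by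
  induction n with
  | zero => simp
  | succ n ih =>
    rw [pow_succ', ih, Finset.mul_sum]
    rw [← (Fin.consEquiv (fun _ : Fin (n+1) => Bool)).sum_comp]
    rw [Fintype.sum_prod_type]
    simp only [Fin.consEquiv_apply, List.ofFn_succ, Fin.cons_zero, Fin.cons_succ, List.prod_cons]
    rw [Fintype.sum_bool]
    simp only [if_neg (show ¬(false = true) by decide), if_true]
    rw [← Finset.sum_add_distrib]
    simp only [← add_mul]

lemma opNorm_cons_prod_le {N : ℕ} :
    ∀ (l : List (Matrix (Fin N) (Fin N) ℂ)) (x : Matrix (Fin N) (Fin N) ℂ),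
      opNorm ((x :: l).prod) ≤ opNorm x * (l.map opNorm).prod := by
  intro l
  induction l with
  | nil => intro x; simp [le_refl]
  | cons y t ih =>
    intro x
    rw [List.prod_cons]
    calc opNorm (x * (y :: t).prod) ≤ opNorm x * opNorm ((y :: t).prod) := opNorm_mul_le _ _
      _ ≤ opNorm x * (opNorm y * (t.map opNorm).prod) := by
          exact mul_le_mul_of_nonneg_left (ih y) (opNorm_nonneg x)
      _ = opNorm x * ((y :: t).map opNorm).prod := by rw [List.map_cons, List.prod_cons]

lemma word_bound {N r p : ℕ} (M : ℝ) (hM : 0 ≤ M) (H C : Matrix (Fin N) (Fin N) ℂ)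
    (hcard : (univ.filter (fun q : Fin N × Fin N => C q.1 q.2 ≠ 0)).card ≤ r)
    (hbnd : ∀ i j, ‖C i j‖ ≤ M) (hC0 : C ≠ 0)
    (f : Fin p → Bool) (i₀ : Fin p) (hf0 : f i₀ = false) (j₀ : Fin p) (hf1 : f j₀ = true) :
    ∃ k, 1 ≤ k ∧ k ≤ p - 1 ∧
      ‖((List.ofFn fun i => if f i then H else C).prod).trace‖ ≤
        opNorm H ^ k * (r * M) ^ (p - k) := by
  classical
  set ν : Matrix (Fin N) (Fin N) ℂ → ℝ := opNorm with hν
  set l : List (Matrix (Fin N) (Fin N) ℂ) := List.ofFn fun i => if f i then H else C with hldef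
  have hl : l.length = p := List.length_ofFn
  set k : ℕ := (univ.filter fun i => f i = true).card with hk
  have hk1 : 1 ≤ k := by
    refine Finset.card_pos.mpr ⟨j₀, ?_⟩
    simp [hf1]
  have hklt : k < p := by
    have hne : (univ.filter fun i => f i = true) ≠ univ := by
      intro h
      have : i₀ ∈ univ.filter fun i => f i = true := by rw [h]; exact mem_univ i₀
      simp [hf0] at this
    have := Finset.card_lt_card ((Finset.ssubset_univ_iff).mpr hne)
    simpa using this
  have hk2 : k ≤ p - 1 := by omega
  -- rotation
  have hi0 : (i₀ : ℕ) ≤ l.length := by rw [hl]; exact le_of_lt i₀.isLt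
  have hi0' : (i₀ : ℕ) < l.length := by rw [hl]; exact i₀.isLt
  have htr : (l.prod).trace = ((l.rotate i₀).prod).trace := (trace_rotate l i₀ hi0).symm
  set rest : List (Matrix (Fin N) (Fin N) ℂ) := l.drop ((i₀ : ℕ) + 1) ++ l.take i₀ with hrest
  have hgot : l[(i₀ : ℕ)]'hi0' = C := by
    simp only [hldef, List.getElem_ofFn]
    simp [hf0]
  have hrot : l.rotate i₀ = C :: rest := by
    rw [List.rotate_eq_drop_append_take hi0, List.drop_eq_getElem_cons hi0', hgot, hrest]
    simp
  -- product of norms over full list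
  have hmapl : ((l.map ν).prod) = ν H ^ k * ν C ^ (p - k) := by
    rw [hldef, List.map_ofFn, List.prod_ofFn]
    have : ∀ i, (ν ∘ fun i => if f i then H else C) i = if f i = true then ν H else ν C := by
      intro i; by_cases h : f i <;> simp [h]
    rw [Finset.prod_congr rfl fun i _ => this i, Finset.prod_ite, Finset.prod_const,
      Finset.prod_const]
    have hcardsum := Finset.card_filter_add_card_filter_not
      (s := (univ : Finset (Fin p))) (p := fun i => f i = true)
    simp only [Finset.card_univ, Fintype.card_fin] at hcardsum
    have : (univ.filter fun i => ¬ (f i = true)).card = p - k := by omega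
    rw [this]
  have hrotmap : ((l.rotate i₀).map ν).prod = (l.map ν).prod := by
    rw [List.rotate_eq_drop_append_take hi0, List.map_append, List.prod_append, mul_comm,
      ← List.prod_append, ← List.map_append, List.take_append_drop]
  have hCpos : 0 < ν C := by
    rcases (opNorm_nonneg C).lt_or_eq with h | h
    · exact h
    · exfalso
      apply hC0
      have h0 : Matrix.toEuclideanCLM (𝕜 := ℂ) C = 0 := by
        have h' : ‖Matrix.toEuclideanCLM (𝕜 := ℂ) C‖ = 0 := h.symm
        exact norm_eq_zero.mp h'
      have := congrArg (Matrix.toEuclideanCLM (𝕜 := ℂ)).symm h0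
      simpa using this
  have hrestprod : ((rest.map ν).prod) = ν H ^ k * ν C ^ (p - k - 1) := by
    apply mul_left_cancel₀ (ne_of_gt hCpos)
    have h1 : ν C * (rest.map ν).prod = ((l.rotate i₀).map ν).prod := by
      rw [hrot, List.map_cons, List.prod_cons]
    rw [h1, hrotmap, hmapl]
    generalize hgen : p - k - 1 = m
    rw [show p - k = m + 1 from by omega, pow_succ]
    ring
  have hCle : ν C ≤ r * M := opNorm_le_card_mul M hM C hcard hbnd
  have hrestlen : rest.length = p - 1 := by
    rw [hrest]
    simp only [List.length_append, List.length_drop, List.length_take, hl]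
    omega
  have hne : rest ≠ [] := by
    intro h
    rw [h] at hrestlen
    simp at hrestlen
    omega
  obtain ⟨x, t, hxt⟩ : ∃ x t, rest = x :: t := by
    cases hrc : rest with
    | nil => exact absurd hrc hne
    | cons x t => exact ⟨x, t, rfl⟩
  have hrestle : ν (rest.prod) ≤ ν H ^ k * (r * M) ^ (p - k - 1) := by
    calc ν (rest.prod) = ν ((x :: t).prod) := by rw [hxt]
      _ ≤ ν x * (t.map ν).prod := opNorm_cons_prod_le t x
      _ = (rest.map ν).prod := by rw [hxt, List.map_cons, List.prod_cons]
      _ = ν H ^ k * ν C ^ (p - k - 1) := hrestprod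
      _ ≤ ν H ^ k * (r * M) ^ (p - k - 1) := by
          apply mul_le_mul_of_nonneg_left _ (pow_nonneg (opNorm_nonneg H) k)
          exact pow_le_pow_left₀ (opNorm_nonneg C) hCle _
  refine ⟨k, hk1, hk2, ?_⟩
  calc ‖(l.prod).trace‖ = ‖((C :: rest).prod).trace‖ := by rw [htr, hrot]
    _ = ‖(C * rest.prod).trace‖ := by rw [List.prod_cons]
    _ ≤ r * (M * ν (rest.prod)) := trace_mul_bound M C _ hcard hbnd hM
    _ ≤ r * (M * (ν H ^ k * (r * M) ^ (p - k - 1))) := by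
        apply mul_le_mul_of_nonneg_left _ (Nat.cast_nonneg r)
        exact mul_le_mul_of_nonneg_left hrestle hM
    _ = ν H ^ k * (r * M) ^ (p - k) := by
        generalize hgen : p - k - 1 = m
        rw [show p - k = m + 1 from by omega, pow_succ]
        ring

end Aux

open Matrix in
theorem trace_power_sparse_perturbation
    {N r p : ℕ} (hp : 3 ≤ p) (M : ℝ) (hM : 0 ≤ M)
    (H C : Matrix (Fin N) (Fin N) ℂ)
    (hH : H.IsHermitian) (hC : C.IsHermitian)
    (hcard : (Finset.univ.filter
        (fun q : Fin N × Fin N => C q.1 q.2 ≠ 0)).card ≤ r)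
    (hbnd : ∀ i j, ‖C i j‖ ≤ M) :
    opNorm C ≤ r * M ∧
      ‖((H + C) ^ p).trace - (H ^ p).trace - (C ^ p).trace‖ ≤
        2 ^ p * r *
          (Finset.Icc 1 (p - 1)).sup'
            ⟨1, Finset.mem_Icc.mpr ⟨le_refl 1, by omega⟩⟩
            (fun k => opNorm H ^ k * (r * M) ^ (p - k)) := by
  classical
  refine ⟨opNorm_le_card_mul M hM C hcard hbnd, ?_⟩
  set S : ℝ := (Finset.Icc 1 (p - 1)).sup'
      ⟨1, Finset.mem_Icc.mpr ⟨le_refl 1, by omega⟩⟩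
      (fun k => opNorm H ^ k * (r * M) ^ (p - k)) with hS
  have hS0 : 0 ≤ S := by
    have h1 : (1 : ℕ) ∈ Finset.Icc 1 (p - 1) := Finset.mem_Icc.mpr ⟨le_refl 1, by omega⟩
    calc (0:ℝ) ≤ opNorm H ^ 1 * (r * M) ^ (p - 1) :=
          mul_nonneg (pow_nonneg (opNorm_nonneg H) 1)
            (pow_nonneg (mul_nonneg (Nat.cast_nonneg r) hM) _)
      _ ≤ S := Finset.le_sup' (fun k => opNorm H ^ k * ((r : ℝ) * M) ^ (p - k)) h1
  by_cases hC0 : C = 0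
  · subst hC0
    rw [add_zero, zero_pow (by omega : p ≠ 0), Matrix.trace_zero, sub_zero, sub_self, norm_zero]
    exact mul_nonneg (mul_nonneg (by positivity) (Nat.cast_nonneg r)) hS0
  -- r ≥ 1
  have hr1 : 1 ≤ r := by
    obtain ⟨i, j, hij⟩ : ∃ i j, C i j ≠ 0 := by
      by_contra h
      push_neg at h
      exact hC0 (by ext i j; rw [h i j]; rfl)
    have : (⟨i, j⟩ : Fin N × Fin N) ∈ univ.filter (fun q : Fin N × Fin N => C q.1 q.2 ≠ 0) := by
      simp [hij]
    calc 1 ≤ (univ.filter (fun q : Fin N × Fin N => C q.1 q.2 ≠ 0)).card :=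
          Finset.card_pos.mpr ⟨_, this⟩
      _ ≤ r := hcard
  set W : (Fin p → Bool) → Matrix (Fin N) (Fin N) ℂ :=
    fun f => (List.ofFn fun i => if f i then H else C).prod with hW
  set T : Fin p → Bool := fun _ => true with hT
  set F : Fin p → Bool := fun _ => false with hF
  have hTF : F ≠ T := by
    intro h
    have := congrFun h ⟨0, by omega⟩
    simp [hT, hF] at this
  have hWT : (W T).trace = (H ^ p).trace := by
    rw [hW]
    simp [hT, List.ofFn_const, List.prod_replicate]
  have hWF : (W F).trace = (C ^ p).trace := by
    rw [hW]
    simp [hF, List.ofFn_const, List.prod_replicate]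
  have hexp : ((H + C) ^ p).trace = ∑ f : Fin p → Bool, (W f).trace := by
    rw [expand H C p, Matrix.trace_sum]
  set s : Finset (Fin p → Bool) := (univ.erase T).erase F with hs
  have hsplit : (∑ f : Fin p → Bool, (W f).trace) =
      (∑ f ∈ s, (W f).trace) + (W F).trace + (W T).trace := by
    rw [hs]
    rw [Finset.sum_erase_add _ _ (Finset.mem_erase.mpr ⟨hTF, mem_univ F⟩)]
    rw [Finset.sum_erase_add _ _ (mem_univ T)]
  have hkey : ((H + C) ^ p).trace - (H ^ p).trace - (C ^ p).trace = ∑ f ∈ s, (W f).trace := by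
    rw [hexp, hsplit, hWT, hWF]; ring
  rw [hkey]
  have hcards : s.card ≤ 2 ^ p := by
    calc s.card ≤ Fintype.card (Fin p → Bool) := Finset.card_le_univ s
      _ = 2 ^ p := by simp [Fintype.card_fun]
  calc ‖∑ f ∈ s, (W f).trace‖ ≤ ∑ f ∈ s, ‖(W f).trace‖ := norm_sum_le _ _
    _ ≤ ∑ _f ∈ s, S := by
        refine Finset.sum_le_sum fun f hf => ?_
        rw [hs, Finset.mem_erase, Finset.mem_erase] at hf
        obtain ⟨hfF, hfT, -⟩ := hf
        obtain ⟨i₀, hi₀⟩ := Function.ne_iff.mp hfT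
        obtain ⟨j₀, hj₀⟩ := Function.ne_iff.mp hfF
        have hi₀' : f i₀ = false := by
          simp only [hT] at hi₀
          exact Bool.not_eq_true _ ▸ (by simpa using hi₀)
        have hj₀' : f j₀ = true := by
          simp only [hF] at hj₀
          simpa using hj₀
        obtain ⟨k, hk1, hk2, hb⟩ := word_bound M hM H C hcard hbnd hC0 f i₀ hi₀' j₀ hj₀'
        calc ‖(W f).trace‖ ≤ opNorm H ^ k * (r * M) ^ (p - k) := hb
          _ ≤ S := Finset.le_sup' (fun k => opNorm H ^ k * ((r : ℝ) * M) ^ (p - k))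
              (Finset.mem_Icc.mpr ⟨hk1, hk2⟩)
    _ = s.card * S := by rw [Finset.sum_const, nsmul_eq_mul]
    _ ≤ (2 ^ p : ℝ) * S := by
        apply mul_le_mul_of_nonneg_right _ hS0
        exact_mod_cast hcards
    _ ≤ 2 ^ p * r * S := by
        rw [mul_assoc]
        apply mul_le_mul_of_nonneg_left _ (by positivity)
        nlinarith [hS0, (show (1:ℝ) ≤ r by exact_mod_cast hr1)]
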